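/- In the disjunction widget of the BSP_r construction (t term components P_1,...,P_t, each with send vertex s_j and receive vertex r_j forming a t-ring, followed by three receive vertices r_{j,a_j}, r_{j,b_j}, r_{j,c_j}, with one token per term component), a colouring sequence can colour some r_j green if and only if at least one r_k is coloured yellow (via the token rule) before any of r_{k,a_k}, r_{k,b_k}, r_{k,c_k} in that component is coloured yellow. -/

import Mathlib

/-! Formal framework: communication graphs and the red/yellow/green colouring game
(Brodsky–Pedersen–Wagner, "On the Complexity of Buffer Allocation in Message Passing Systems"),
with receive-side token pools. -/

inductive Colour : Type
  | red | yellow | green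
deriving DecidableEq

/-- A communication graph: vertices are partitioned into start/send/receive/end vertices,
`pred u v` means `u` is the component predecessor of `v` (a process arc `u → v`),
`matched u v` is a communication arc from send `u` to its matching receive `v`,
`comp v` is the index of the process component of `v`, and `pos v` is the position
of `v` within its component chain. -/
structure CommGraph (V : Type) where
  isStart : V → Prop
  isSend : V → Prop
  isRecv : V → Prop
  isEnd : V → Prop
  pred : V → V → Prop
  matched : V → V → Prop
  comp : V → ℕ
  pos : V → ℕ

namespace CommGraph

variable {V : Type}

/-- An arc of the communication graph (process arc or communication arc). -/
def GArc (G : CommGraph V) (u v : V) : Prop := G.pred u v ∨ G.matched u v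

/-- Well-formedness of a communication graph: the vertex kinds partition `V`,
components are chains (unique predecessors, positions increase along process arcs),
communication arcs go from sends to receives in different components and form a
partial matching, and the graph is acyclic (arcs admit no infinite descent). -/
structure WF (G : CommGraph V) : Prop where
  kinds : ∀ v, G.isStart v ∨ G.isSend v ∨ G.isRecv v ∨ G.isEnd v
  start_not_send : ∀ v, G.isStart v → ¬ G.isSend v
  start_not_recv : ∀ v, G.isStart v → ¬ G.isRecv v
  start_not_end : ∀ v, G.isStart v → ¬ G.isEnd v
  send_not_recv : ∀ v, G.isSend v → ¬ G.isRecv v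
  send_not_end : ∀ v, G.isSend v → ¬ G.isEnd v
  recv_not_end : ∀ v, G.isRecv v → ¬ G.isEnd v
  pred_unique : ∀ {u u' v}, G.pred u v → G.pred u' v → u = u'
  pred_comp : ∀ {u v}, G.pred u v → G.comp u = G.comp v
  pred_pos : ∀ {u v}, G.pred u v → G.pos v = G.pos u + 1
  start_no_pred : ∀ {u v}, G.pred u v → ¬ G.isStart v
  has_pred : ∀ v, ¬ G.isStart v → ∃ u, G.pred u v
  matched_send : ∀ {u v}, G.matched u v → G.isSend u
  matched_recv : ∀ {u v}, G.matched u v → G.isRecv v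
  matched_comp : ∀ {u v}, G.matched u v → G.comp u ≠ G.comp v
  matched_unique_left : ∀ {u u' v}, G.matched u v → G.matched u' v → u = u'
  matched_unique_right : ∀ {u v v'}, G.matched u v → G.matched u v' → v = v'
  send_has_match : ∀ v, G.isSend v → ∃ w, G.matched v w
  recv_has_match : ∀ v, G.isRecv v → ∃ w, G.matched w v
  dag : WellFounded fun u v => G.GArc u v

end CommGraph

/-- A state of the colouring game: the colouring, which receive vertices currently
hold a token on their incident communication arc, and the number of available
tokens in each (per-process, receive-side) pool. -/
structure St (V : Type) where
  col : V → Colour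
  tok : V → Bool
  pool : ℕ → ℕ

/-- The names of the colouring rules. -/
inductive Rule : Type
  | sendYel | recvYel | recvYelTok | sendGrn | recvGrn | endYel | endGrn
deriving DecidableEq

variable {V : Type}

/-- One move of the colouring game (receive-side buffering: the token used by the
buffered-receive rule `recvYelTok` comes from the pool of the receiving component,
and is returned when the receive turns green). -/
inductive Step [DecidableEq V] (G : CommGraph V) : Rule → St V → St V → Prop
  | sendYel {s : St V} {v u : V} :
      G.isSend v → s.col v = .red → G.pred u v → s.col u = .green →
      Step G .sendYel s ⟨Function.update s.col v .yellow, s.tok, s.pool⟩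
  | recvYel {s : St V} {v u w : V} :
      G.isRecv v → s.col v = .red → G.matched w v → s.col w = .yellow →
      G.pred u v → s.col u = .green →
      Step G .recvYel s ⟨Function.update s.col v .yellow, s.tok, s.pool⟩
  | recvYelTok {s : St V} {v w : V} :
      G.isRecv v → s.col v = .red → G.matched w v → s.col w = .yellow →
      0 < s.pool (G.comp v) →
      Step G .recvYelTok s ⟨Function.update s.col v .yellow,
        Function.update s.tok v true,
        Function.update s.pool (G.comp v) (s.pool (G.comp v) - 1)⟩
  | sendGrn {s : St V} {v r : V} :
      G.isSend v → s.col v = .yellow → G.matched v r → s.col r = .yellow →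
      Step G .sendGrn s ⟨Function.update s.col v .green, s.tok, s.pool⟩
  | recvGrn {s : St V} {v u w : V} :
      G.isRecv v → s.col v = .yellow → G.pred u v → s.col u = .green →
      G.matched w v → s.col w = .green →
      Step G .recvGrn s ⟨Function.update s.col v .green,
        Function.update s.tok v false,
        if s.tok v then
          Function.update s.pool (G.comp v) (s.pool (G.comp v) + 1)
        else s.pool⟩
  | endYel {s : St V} {v u : V} :
      G.isEnd v → s.col v = .red → G.pred u v → s.col u = .green →
      Step G .endYel s ⟨Function.update s.col v .yellow, s.tok, s.pool⟩
  | endGrn {s : St V} {v : V} :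
      G.isEnd v → s.col v = .yellow →
      Step G .endGrn s ⟨Function.update s.col v .green, s.tok, s.pool⟩

/-- `IsSeq G s l` : the list `l` of (rule, state) pairs is a valid colouring sequence
starting from state `s`. -/
def IsSeq [DecidableEq V] (G : CommGraph V) : St V → List (Rule × St V) → Prop
  | _, [] => True
  | s, p :: l => Step G p.1 s p.2 ∧ IsSeq G p.2 l

/-- The list of states visited by a colouring sequence. -/
def states (s0 : St V) (l : List (Rule × St V)) : List (St V) :=
  s0 :: l.map Prod.snd

/-- The final state of a colouring sequence. -/
def finalSt (s0 : St V) (l : List (Rule × St V)) : St V :=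
  (states s0 l).getLast (by simp [states])

open Classical in
/-- The initial state: start vertices green, all others red, no tokens placed,
token pools given by the token assignment `B` (pool of component `i` holds `B i`). -/
noncomputable def init (G : CommGraph V) (B : ℕ → ℕ) : St V :=
  ⟨fun v => if G.isStart v then Colour.green else Colour.red, fun _ => false, B⟩

/-- A state from which no colouring rule applies. -/
def MaximalFrom [DecidableEq V] (G : CommGraph V) (s : St V) : Prop :=
  ∀ ρ t, ¬ Step G ρ s t

/-- A state is complete when every vertex is green. -/
def Completes (s : St V) : Prop := ∀ v, s.col v = Colour.green

/-- A deadlocking colouring sequence from `s0`: a maximal sequence whose final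
colouring has a non-green vertex. -/
def Deadlocks [DecidableEq V] (G : CommGraph V) (s0 : St V) (l : List (Rule × St V)) : Prop :=
  IsSeq G s0 l ∧ MaximalFrom G (finalSt s0 l) ∧ ¬ Completes (finalSt s0 l)

/-- The system is safe (deadlock free) under token assignment `B`:
every maximal colouring sequence completes. -/
def DeadlockFree [DecidableEq V] (G : CommGraph V) (B : ℕ → ℕ) : Prop :=
  ∀ l, IsSeq G (init G B) l → MaximalFrom G (finalSt (init G B) l) →
    Completes (finalSt (init G B) l)

/-- A state blocks: some yellow send has a matching red receive to which the
buffered-receive rule cannot be applied (no token available). -/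
def Blocked (G : CommGraph V) (s : St V) : Prop :=
  ∃ v r, G.matched v r ∧ s.col v = Colour.yellow ∧ s.col r = Colour.red ∧
    s.pool (G.comp r) = 0

/-- The graph is block free under token assignment `B`: no colouring sequence blocks. -/
def BlockFree [DecidableEq V] (G : CommGraph V) (B : ℕ → ℕ) : Prop :=
  ∀ l, IsSeq G (init G B) l → ¬ Blocked G (finalSt (init G B) l)


/-! ### Auxiliary lemmas -/

namespace DWAux

def cNat : Colour → ℕ
  | .red => 0 | .yellow => 1 | .green => 2

/-- Pointwise colour order between states. -/
def colLe {V : Type} (x y : St V) : Prop :=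
  ∀ v, (cNat (x.col v)) ≤ (cNat (y.col v))

lemma colLe.refl {V : Type} (x : St V) : colLe x x := fun _ => le_rfl

lemma colLe.trans {V : Type} {x y z : St V} (h1 : colLe x y) (h2 : colLe y z) :
    colLe x z := fun v => (h1 v).trans (h2 v)

lemma colLe.green {V : Type} {x y : St V} (h : colLe x y) {v : V}
    (hv : x.col v = Colour.green) : y.col v = Colour.green := by
  have := h v; rw [hv] at this; cases hy : y.col v <;> rw [hy] at this <;>
    simp [cNat] at this ⊢

lemma colLe.ne_red {V : Type} {x y : St V} (h : colLe x y) {v : V}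
    (hv : x.col v ≠ Colour.red) : y.col v ≠ Colour.red := by
  have := h v
  cases hx : x.col v <;> rw [hx] at this <;> [exact absurd hx hv; skip; skip] <;>
    · cases hy : y.col v <;> rw [hy] at this <;> simp_all [cNat]

variable {V : Type} [DecidableEq V] {G : CommGraph V}

lemma Step.exists_update {ρ : Rule} {x y : St V} (h : Step G ρ x y) :
    ∃ v c, y.col = Function.update x.col v c ∧ cNat (x.col v) ≤ cNat c := by
  cases h <;> exact ⟨_, _, rfl, by simp_all [cNat]⟩

lemma Step.mono {ρ : Rule} {x y : St V} (h : Step G ρ x y) : colLe x y := by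
  obtain ⟨v, c, hy, hle⟩ := Step.exists_update h
  intro u
  rw [hy]
  by_cases hu : u = v
  · subst hu; simpa [Function.update_self] using hle
  · simp [Function.update_of_ne hu]

@[simp] lemma finalSt_nil (x : St V) : finalSt x ([] : List (Rule × St V)) = x := rfl

@[simp] lemma states_cons (x : St V) (p : Rule × St V) (l : List (Rule × St V)) :
    states x (p :: l) = x :: states p.2 l := by
  simp [states]

@[simp] lemma finalSt_cons (x : St V) (p : Rule × St V) (l : List (Rule × St V)) :
    finalSt x (p :: l) = finalSt p.2 l := by
  simp only [finalSt, states_cons]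
  exact List.getLast_cons (by simp [states])

lemma IsSeq_append {x : St V} {l1 l2 : List (Rule × St V)} :
    IsSeq G x (l1 ++ l2) ↔ IsSeq G x l1 ∧ IsSeq G (finalSt x l1) l2 := by
  induction l1 generalizing x with
  | nil => simp [IsSeq]
  | cons p l ih => simp [IsSeq, ih, and_assoc]

lemma finalSt_append (x : St V) (l1 l2 : List (Rule × St V)) :
    finalSt x (l1 ++ l2) = finalSt (finalSt x l1) l2 := by
  induction l1 generalizing x with
  | nil => simp
  | cons p l ih => simp [ih]

/-- Reachability between states by a valid colouring sequence. -/
def Reaches (G : CommGraph V) (x y : St V) : Prop :=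
  ∃ l, IsSeq G x l ∧ finalSt x l = y

lemma Reaches.refl (x : St V) : Reaches G x x := ⟨[], trivial, rfl⟩

lemma Reaches.trans {x y z : St V} (h1 : Reaches G x y) (h2 : Reaches G y z) :
    Reaches G x z := by
  obtain ⟨l1, hl1, e1⟩ := h1
  obtain ⟨l2, hl2, e2⟩ := h2
  exact ⟨l1 ++ l2, IsSeq_append.mpr ⟨hl1, by rw [e1]; exact hl2⟩,
    by rw [finalSt_append, e1, e2]⟩

lemma Reaches.single {ρ : Rule} {x y : St V} (h : Step G ρ x y) : Reaches G x y :=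
  ⟨[(ρ, y)], ⟨h, trivial⟩, rfl⟩

lemma colLe_finalSt_of_mem : ∀ (l : List (Rule × St V)) (x y : St V),
    IsSeq G x l → y ∈ states x l → colLe y (finalSt x l) := by
  intro l
  induction l with
  | nil =>
      intro x y _ hy
      simp [states] at hy; subst hy; exact colLe.refl _
  | cons p l ih =>
      intro x y hseq hy
      rw [states_cons] at hy
      rw [finalSt_cons]
      rcases List.mem_cons.mp hy with h | h
      · subst h
        exact (Step.mono hseq.1).trans
          (ih p.2 p.2 hseq.2 (by cases l <;> simp [states]))
      · exact ih p.2 y hseq.2 h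

lemma colLe_finalSt {l : List (Rule × St V)} {x : St V} (h : IsSeq G x l) :
    colLe x (finalSt x l) :=
  colLe_finalSt_of_mem l x x h (by cases l <;> simp [states])

lemma Reaches.colLe {x y : St V} (h : Reaches G x y) : colLe x y := by
  obtain ⟨l, hl, e⟩ := h; exact e ▸ colLe_finalSt hl

end DWAux
namespace DWAux

variable {V : Type} [DecidableEq V] [Fintype V] {G : CommGraph V}

/-- Number of placed tokens drawn from the pool of component `c`. -/
def tokCnt (G : CommGraph V) (tk : V → Bool) (c : ℕ) : ℕ :=
  (Finset.univ.filter fun v => tk v = true ∧ G.comp v = c).card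

lemma tokCnt_update_true {tk : V → Bool} {v : V} (hv : tk v = false) (c : ℕ) :
    tokCnt G (Function.update tk v true) c
      = tokCnt G tk c + (if G.comp v = c then 1 else 0) := by
  by_cases hc : G.comp v = c
  · rw [if_pos hc]
    have hset : (Finset.univ.filter fun u => Function.update tk v true u = true ∧ G.comp u = c)
        = insert v (Finset.univ.filter fun u => tk u = true ∧ G.comp u = c) := by
      ext u
      by_cases hu : u = v
      · subst hu; simp [Function.update_self, hc]
      · simp [Function.update_of_ne hu, hu]
    rw [tokCnt, hset, Finset.card_insert_of_notMem (by simp [hv]), tokCnt]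
  · rw [if_neg hc]
    have hset : (Finset.univ.filter fun u => Function.update tk v true u = true ∧ G.comp u = c)
        = (Finset.univ.filter fun u => tk u = true ∧ G.comp u = c) := by
      ext u
      by_cases hu : u = v
      · subst hu; simp [Function.update_self, hc, hv]
      · simp [Function.update_of_ne hu]
    rw [tokCnt, hset, tokCnt]
    omega

lemma tokCnt_update_false {tk : V → Bool} {v : V} (hv : tk v = true) (c : ℕ) :
    tokCnt G tk c
      = tokCnt G (Function.update tk v false) c + (if G.comp v = c then 1 else 0) := by
  by_cases hc : G.comp v = c
  · rw [if_pos hc]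
    have hset : (Finset.univ.filter fun u => tk u = true ∧ G.comp u = c)
        = insert v (Finset.univ.filter fun u => Function.update tk v false u = true ∧ G.comp u = c) := by
      ext u
      by_cases hu : u = v
      · subst hu; simp [Function.update_self, hc, hv]
      · simp [Function.update_of_ne hu, hu]
    rw [tokCnt, hset, Finset.card_insert_of_notMem (by simp [Function.update_self]), tokCnt]
  · rw [if_neg hc]
    have hset : (Finset.univ.filter fun u => tk u = true ∧ G.comp u = c)
        = (Finset.univ.filter fun u => Function.update tk v false u = true ∧ G.comp u = c) := by
      ext u
      by_cases hu : u = v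
      · subst hu; simp [Function.update_self, hc]
      · simp [Function.update_of_ne hu]
    rw [tokCnt, hset, tokCnt]
    omega

/-- The generic invariant of the colouring game maintained by every step. -/
def GInv (G : CommGraph V) (B : ℕ → ℕ) (x : St V) : Prop :=
  (∀ v, G.isStart v → x.col v = Colour.green) ∧
  (∀ u v, G.matched u v → x.col v = Colour.green → x.col u = Colour.green) ∧
  (∀ u v, G.matched u v → x.col u = Colour.green → x.col v ≠ Colour.red) ∧
  (∀ v, x.tok v = true → G.isRecv v ∧ x.col v = Colour.yellow) ∧
  (∀ c, x.pool c + tokCnt G x.tok c = B c)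

lemma ginv_init (hwf : G.WF) (B : ℕ → ℕ) : GInv G B (init G B) := by
  refine ⟨fun v hv => by simp [init, hv], ?_, ?_, ?_, ?_⟩
  · intro u v hm hgreen
    have : ¬ G.isStart v := fun h => hwf.start_not_recv v h (hwf.matched_recv hm)
    simp [init, this] at hgreen
  · intro u v hm hgreen
    have : ¬ G.isStart u := fun h => hwf.start_not_send u h (hwf.matched_send hm)
    simp [init, this] at hgreen
  · intro v hv; simp [init] at hv
  · intro c
    have : tokCnt G (fun _ : V => false) c = 0 := by
      rw [tokCnt]
      simp
    simp [init, this]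

end DWAux
namespace DWAux

variable {V : Type} [DecidableEq V] [Fintype V] {G : CommGraph V}

lemma ginv_step (hwf : G.WF) {B : ℕ → ℕ} {ρ : Rule} {x y : St V}
    (h : Step G ρ x y) (hx : GInv G B x) : GInv G B y := by
  obtain ⟨hS, hM1, hM2, hT, hP⟩ := hx
  refine ⟨fun v hv => (Step.mono h).green (hS v hv), ?_, ?_, ?_, ?_⟩
  · -- matched u v, y.col v = green → y.col u = green
    intro u v hm hgv
    cases h with
    | sendYel hw hc hp hg =>
        rename_i w u0
        by_cases hvw : v = w
        · subst hvw
          have : Function.update x.col v Colour.yellow v = Colour.green := hgv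
          simp [Function.update_self] at this
        · have hxv : Function.update x.col _ Colour.yellow v = Colour.green := hgv
          rw [Function.update_of_ne hvw] at hxv
          exact (Step.mono (Step.sendYel hw hc hp hg)).green (hM1 u v hm hxv)
    | recvYel hw hc hmm hyw hp hg =>
        rename_i w u0 w0
        by_cases hvw : v = w
        · subst hvw
          have : Function.update x.col v Colour.yellow v = Colour.green := hgv
          simp [Function.update_self] at this
        · have hxv : Function.update x.col _ Colour.yellow v = Colour.green := hgv
          rw [Function.update_of_ne hvw] at hxv
          exact (Step.mono (Step.recvYel hw hc hmm hyw hp hg)).green (hM1 u v hm hxv)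
    | recvYelTok hw hc hmm hyw hpool =>
        rename_i w w0
        by_cases hvw : v = w
        · subst hvw
          have : Function.update x.col v Colour.yellow v = Colour.green := hgv
          simp [Function.update_self] at this
        · have hxv : Function.update x.col _ Colour.yellow v = Colour.green := hgv
          rw [Function.update_of_ne hvw] at hxv
          exact (Step.mono (Step.recvYelTok hw hc hmm hyw hpool)).green (hM1 u v hm hxv)
    | endYel hw hc hp hg =>
        rename_i w u0
        by_cases hvw : v = w
        · subst hvw
          have : Function.update x.col v Colour.yellow v = Colour.green := hgv
          simp [Function.update_self] at this
        · have hxv : Function.update x.col _ Colour.yellow v = Colour.green := hgv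
          rw [Function.update_of_ne hvw] at hxv
          exact (Step.mono (Step.endYel hw hc hp hg)).green (hM1 u v hm hxv)
    | sendGrn hw hc hmm hyr =>
        rename_i w r0
        by_cases hvw : v = w
        · subst hvw
          exact absurd hw (fun hs => hwf.send_not_recv v hs (hwf.matched_recv hm))
        · have hxv : Function.update x.col _ Colour.green v = Colour.green := hgv
          rw [Function.update_of_ne hvw] at hxv
          exact (Step.mono (Step.sendGrn hw hc hmm hyr)).green (hM1 u v hm hxv)
    | recvGrn hw hc hp hg hmm hgw =>
        rename_i w u0 w0
        by_cases hvw : v = w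
        · subst hvw
          have hu : u = w0 := hwf.matched_unique_left hm hmm
          subst hu
          exact (Step.mono (Step.recvGrn hw hc hp hg hmm hgw)).green hgw
        · have hxv : Function.update x.col _ Colour.green v = Colour.green := hgv
          rw [Function.update_of_ne hvw] at hxv
          exact (Step.mono (Step.recvGrn hw hc hp hg hmm hgw)).green (hM1 u v hm hxv)
    | endGrn hw hc =>
        rename_i w
        by_cases hvw : v = w
        · subst hvw
          exact absurd hw (fun hs => hwf.recv_not_end v (hwf.matched_recv hm) hs)
        · have hxv : Function.update x.col _ Colour.green v = Colour.green := hgv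
          rw [Function.update_of_ne hvw] at hxv
          exact (Step.mono (Step.endGrn hw hc)).green (hM1 u v hm hxv)
  · -- matched u v, y.col u = green → y.col v ≠ red
    intro u v hm hgu
    cases h with
    | sendYel hw hc hp hg =>
        rename_i w u0
        by_cases huw : u = w
        · subst huw
          have : Function.update x.col u Colour.yellow u = Colour.green := hgu
          simp [Function.update_self] at this
        · have hxu : Function.update x.col _ Colour.yellow u = Colour.green := hgu
          rw [Function.update_of_ne huw] at hxu
          exact (Step.mono (Step.sendYel hw hc hp hg)).ne_red (hM2 u v hm hxu)
    | recvYel hw hc hmm hyw hp hg =>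
        rename_i w u0 w0
        by_cases huw : u = w
        · subst huw
          have : Function.update x.col u Colour.yellow u = Colour.green := hgu
          simp [Function.update_self] at this
        · have hxu : Function.update x.col _ Colour.yellow u = Colour.green := hgu
          rw [Function.update_of_ne huw] at hxu
          exact (Step.mono (Step.recvYel hw hc hmm hyw hp hg)).ne_red (hM2 u v hm hxu)
    | recvYelTok hw hc hmm hyw hpool =>
        rename_i w w0
        by_cases huw : u = w
        · subst huw
          have : Function.update x.col u Colour.yellow u = Colour.green := hgu
          simp [Function.update_self] at this
        · have hxu : Function.update x.col _ Colour.yellow u = Colour.green := hgu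
          rw [Function.update_of_ne huw] at hxu
          exact (Step.mono (Step.recvYelTok hw hc hmm hyw hpool)).ne_red (hM2 u v hm hxu)
    | endYel hw hc hp hg =>
        rename_i w u0
        by_cases huw : u = w
        · subst huw
          have : Function.update x.col u Colour.yellow u = Colour.green := hgu
          simp [Function.update_self] at this
        · have hxu : Function.update x.col _ Colour.yellow u = Colour.green := hgu
          rw [Function.update_of_ne huw] at hxu
          exact (Step.mono (Step.endYel hw hc hp hg)).ne_red (hM2 u v hm hxu)
    | sendGrn hw hc hmm hyr =>
        rename_i w r0
        by_cases huw : u = w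
        · subst huw
          have hv : v = r0 := hwf.matched_unique_right hm hmm
          subst hv
          exact (Step.mono (Step.sendGrn hw hc hmm hyr)).ne_red (by rw [hyr]; simp)
        · have hxu : Function.update x.col _ Colour.green u = Colour.green := hgu
          rw [Function.update_of_ne huw] at hxu
          exact (Step.mono (Step.sendGrn hw hc hmm hyr)).ne_red (hM2 u v hm hxu)
    | recvGrn hw hc hp hg hmm hgw =>
        rename_i w u0 w0
        by_cases huw : u = w
        · subst huw
          exact absurd hw (fun hr => hwf.send_not_recv u (hwf.matched_send hm) hr)
        · have hxu : Function.update x.col _ Colour.green u = Colour.green := hgu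
          rw [Function.update_of_ne huw] at hxu
          exact (Step.mono (Step.recvGrn hw hc hp hg hmm hgw)).ne_red (hM2 u v hm hxu)
    | endGrn hw hc =>
        rename_i w
        by_cases huw : u = w
        · subst huw
          exact absurd hw (fun he => hwf.send_not_end u (hwf.matched_send hm) he)
        · have hxu : Function.update x.col _ Colour.green u = Colour.green := hgu
          rw [Function.update_of_ne huw] at hxu
          exact (Step.mono (Step.endGrn hw hc)).ne_red (hM2 u v hm hxu)
  · -- tokens sit on yellow receives
    intro v hv
    cases h with
    | sendYel hw hc hp hg =>
        rename_i w u0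
        have hxv : x.tok v = true := hv
        refine ⟨(hT v hxv).1, ?_⟩
        have hvw : v ≠ w := fun he =>
          hwf.send_not_recv w hw (he ▸ (hT v hxv).1)
        show Function.update x.col w Colour.yellow v = Colour.yellow
        rw [Function.update_of_ne hvw]; exact (hT v hxv).2
    | recvYel hw hc hmm hyw hp hg =>
        rename_i w u0 w0
        have hxv : x.tok v = true := hv
        refine ⟨(hT v hxv).1, ?_⟩
        have hvw : v ≠ w := fun he => by
          rw [he] at hxv
          rw [(hT w hxv).2] at hc
          exact Colour.noConfusion hc
        show Function.update x.col w Colour.yellow v = Colour.yellow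
        rw [Function.update_of_ne hvw]; exact (hT v hxv).2
    | recvYelTok hw hc hmm hyw hpool =>
        rename_i w w0
        by_cases hvw : v = w
        · subst hvw
          refine ⟨hw, ?_⟩
          show Function.update x.col v Colour.yellow v = Colour.yellow
          rw [Function.update_self]
        · have hxv : x.tok v = true := by
            have : Function.update x.tok w true v = true := hv
            rwa [Function.update_of_ne hvw] at this
          refine ⟨(hT v hxv).1, ?_⟩
          show Function.update x.col w Colour.yellow v = Colour.yellow
          rw [Function.update_of_ne hvw]; exact (hT v hxv).2
    | sendGrn hw hc hmm hyr =>
        rename_i w r0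
        have hxv : x.tok v = true := hv
        refine ⟨(hT v hxv).1, ?_⟩
        have hvw : v ≠ w := fun he =>
          hwf.send_not_recv w hw (he ▸ (hT v hxv).1)
        show Function.update x.col w Colour.green v = Colour.yellow
        rw [Function.update_of_ne hvw]; exact (hT v hxv).2
    | recvGrn hw hc hp hg hmm hgw =>
        rename_i w u0 w0
        by_cases hvw : v = w
        · subst hvw
          have : Function.update x.tok v false v = true := hv
          simp [Function.update_self] at this
        · have hxv : x.tok v = true := by
            have : Function.update x.tok w false v = true := hv
            rwa [Function.update_of_ne hvw] at this
          refine ⟨(hT v hxv).1, ?_⟩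
          show Function.update x.col w Colour.green v = Colour.yellow
          rw [Function.update_of_ne hvw]; exact (hT v hxv).2
    | endYel hw hc hp hg =>
        rename_i w u0
        have hxv : x.tok v = true := hv
        refine ⟨(hT v hxv).1, ?_⟩
        have hvw : v ≠ w := fun he =>
          hwf.recv_not_end w (he ▸ (hT v hxv).1) hw
        show Function.update x.col w Colour.yellow v = Colour.yellow
        rw [Function.update_of_ne hvw]; exact (hT v hxv).2
    | endGrn hw hc =>
        rename_i w
        have hxv : x.tok v = true := hv
        refine ⟨(hT v hxv).1, ?_⟩
        have hvw : v ≠ w := fun he =>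
          hwf.recv_not_end w (he ▸ (hT v hxv).1) hw
        show Function.update x.col w Colour.green v = Colour.yellow
        rw [Function.update_of_ne hvw]; exact (hT v hxv).2
  · -- token count
    intro c
    cases h with
    | sendYel hw hc hp hg => exact hP c
    | recvYel hw hc hmm hyw hp hg => exact hP c
    | sendGrn hw hc hmm hyr => exact hP c
    | endYel hw hc hp hg => exact hP c
    | endGrn hw hc => exact hP c
    | recvYelTok hw hc hmm hyw hpool =>
        rename_i w w0
        have hfalse : x.tok w = false := by
          cases hb : x.tok w
          · rfl
          · rw [(hT w hb).2] at hc; exact Colour.noConfusion hc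
        show Function.update x.pool (G.comp w) (x.pool (G.comp w) - 1) c
            + tokCnt G (Function.update x.tok w true) c = B c
        rw [tokCnt_update_true hfalse c]
        by_cases hcc : G.comp w = c
        · subst hcc
          rw [Function.update_self, if_pos rfl]
          have := hP (G.comp w)
          omega
        · rw [Function.update_of_ne (fun he => hcc he.symm), if_neg hcc]
          have := hP c
          omega
    | recvGrn hw hc hp hg hmm hgw =>
        rename_i w u0 w0
        cases hb : x.tok w
        · have hupd : Function.update x.tok w false = x.tok := by
            rw [← hb]; exact Function.update_eq_self w x.tok
          show x.pool c + tokCnt G (Function.update x.tok w false) c = B c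
          rw [hupd]
          exact hP c
        · show Function.update x.pool (G.comp w) (x.pool (G.comp w) + 1) c
              + tokCnt G (Function.update x.tok w false) c = B c
          have hcnt := tokCnt_update_false (G := G) (tk := x.tok) (v := w) hb c
          by_cases hcc : G.comp w = c
          · subst hcc
            rw [Function.update_self]
            rw [if_pos rfl] at hcnt
            have := hP (G.comp w)
            omega
          · rw [Function.update_of_ne (fun he => hcc he.symm)]
            rw [if_neg hcc] at hcnt
            have := hP c
            omega

lemma ginv_isSeq {B : ℕ → ℕ} (hwf : G.WF) :
    ∀ (l : List (Rule × St V)) (x : St V), IsSeq G x l → GInv G B x →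
      GInv G B (finalSt x l) := by
  intro l
  induction l with
  | nil => intro x _ hx; simpa using hx
  | cons p l ih =>
      intro x hseq hx
      rw [finalSt_cons]
      exact ih p.2 hseq.2 (ginv_step hwf hseq.1 hx)

lemma ginv_reaches {B : ℕ → ℕ} (hwf : G.WF) {x y : St V}
    (h : Reaches G x y) (hx : GInv G B x) : GInv G B y := by
  obtain ⟨l, hl, e⟩ := h; exact e ▸ ginv_isSeq hwf l x hl hx

end DWAux
namespace DWAux

section Widget

variable {V : Type} [DecidableEq V] [Fintype V]
  {t : ℕ} [NeZero t] (ht : 1 < t)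
  (G : CommGraph V) (hwf : G.WF) (B : ℕ → ℕ)
  (st s r : Fin t → V) (a : Fin t → Fin 3 → V)
  (hstart : ∀ j, G.isStart (st j))
  (hchain : ∀ j, G.pred (st j) (s j) ∧ G.pred (s j) (r j) ∧ G.pred (r j) (a j 0) ∧
    G.pred (a j 0) (a j 1) ∧ G.pred (a j 1) (a j 2))
  (hsend : ∀ j, G.isSend (s j))
  (hrecv : ∀ j, G.isRecv (r j) ∧ ∀ i, G.isRecv (a j i))
  (hring : ∀ j, G.matched (s j) (r (j + 1)))
  (hB : ∀ j, B (G.comp (s j)) = 1)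

/-- Widget invariant: a non-red buffered receive `a j i` either still holds its
token or its component head receive `r j` has already been coloured. -/
def AInv (x : St V) : Prop :=
  ∀ (j : Fin t) (i : Fin 3), x.col (a j i) ≠ Colour.red →
    x.tok (a j i) = true ∨ x.col (r j) ≠ Colour.red

include hwf hchain

lemma r_ne_a (j : Fin t) (i : Fin 3) : r j ≠ a j i := by
  have h0 : G.pos (r j) = G.pos (s j) + 1 := hwf.pred_pos (hchain j).2.1
  have h1 : G.pos (a j 0) = G.pos (r j) + 1 := hwf.pred_pos (hchain j).2.2.1
  have h2 : G.pos (a j 1) = G.pos (a j 0) + 1 := hwf.pred_pos (hchain j).2.2.2.1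
  have h3 : G.pos (a j 2) = G.pos (a j 1) + 1 := hwf.pred_pos (hchain j).2.2.2.2
  have hlt : G.pos (r j) < G.pos (a j i) := by
    match i with
    | 0 => omega
    | 1 => omega
    | 2 => omega
  intro he
  have := congrArg G.pos he
  omega

lemma comp_r (j : Fin t) : G.comp (r j) = G.comp (s j) :=
  (hwf.pred_comp (hchain j).2.1).symm

lemma comp_a (j : Fin t) (i : Fin 3) : G.comp (a j i) = G.comp (s j) := by
  have h1 : G.comp (a j 0) = G.comp (r j) := (hwf.pred_comp (hchain j).2.2.1).symm
  have h2 : G.comp (a j 1) = G.comp (a j 0) := (hwf.pred_comp (hchain j).2.2.2.1).symm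
  have h3 : G.comp (a j 2) = G.comp (a j 1) := (hwf.pred_comp (hchain j).2.2.2.2).symm
  have hr : G.comp (r j) = G.comp (s j) := (hwf.pred_comp (hchain j).2.1).symm
  match i with
  | 0 => omega
  | 1 => omega
  | 2 => omega

include hrecv

lemma ainv_init : AInv r a (init G B) := by
  intro j i h
  exfalso
  apply h
  have : ¬ G.isStart (a j i) := fun hs => hwf.start_not_recv _ hs ((hrecv j).2 i)
  simp [init, this]

lemma init_r_red (j : Fin t) : (init G B).col (r j) = Colour.red := by
  have : ¬ G.isStart (r j) := fun hs => hwf.start_not_recv _ hs (hrecv j).1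
  simp [init, this]

lemma ainv_step {x y : St V} {ρ : Rule} (hg : GInv G B x) (hA : AInv r a x)
    (h : Step G ρ x y) : AInv r a y := by
  intro j i hne
  have hra : r j ≠ a j i := r_ne_a G hwf _ _ _ _ hchain j i
  have key : ∀ u, G.pred u (a j i) → x.col u = Colour.green →
      x.col (r j) ≠ Colour.red := by
    intro u hp hgreen
    revert hp
    match i with
    | 0 =>
      intro hp
      have hu : u = r j := hwf.pred_unique hp (hchain j).2.2.1
      rw [← hu, hgreen]; simp
    | 1 =>
      intro hp
      have hu : u = a j 0 := hwf.pred_unique hp (hchain j).2.2.2.1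
      subst hu
      rcases hA j 0 (by rw [hgreen]; simp) with htok | hr
      · rw [(hg.2.2.2.1 _ htok).2] at hgreen; exact absurd hgreen (by simp)
      · exact hr
    | 2 =>
      intro hp
      have hu : u = a j 1 := hwf.pred_unique hp (hchain j).2.2.2.2
      subst hu
      rcases hA j 1 (by rw [hgreen]; simp) with htok | hr
      · rw [(hg.2.2.2.1 _ htok).2] at hgreen; exact absurd hgreen (by simp)
      · exact hr
  by_cases hpre : x.col (a j i) = Colour.red
  · -- the step itself coloured `a j i`
    cases h with
    | sendYel hw hc hp hgrn =>
        rename_i w u0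
        by_cases hwa : w = a j i
        · exact absurd hw (fun hs =>
            hwf.send_not_recv w hs (hwa ▸ (hrecv j).2 i))
        · refine absurd hpre ?_
          have h2 : Function.update x.col w Colour.yellow (a j i) ≠ Colour.red := hne
          rwa [Function.update_of_ne (fun he => hwa he.symm)] at h2
    | recvYel hw hc hmm hyw hp hgrn =>
        rename_i w u0 w0
        by_cases hwa : w = a j i
        · subst hwa
          right
          have hrj := key u0 hp hgrn
          show Function.update x.col (a j i) Colour.yellow (r j) ≠ Colour.red
          rw [Function.update_of_ne hra]
          exact hrj
        · refine absurd hpre ?_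
          have h2 : Function.update x.col w Colour.yellow (a j i) ≠ Colour.red := hne
          rwa [Function.update_of_ne (fun he => hwa he.symm)] at h2
    | recvYelTok hw hc hmm hyw hpool =>
        rename_i w w0
        by_cases hwa : w = a j i
        · subst hwa
          left
          show Function.update x.tok (a j i) true (a j i) = true
          rw [Function.update_self]
        · refine absurd hpre ?_
          have h2 : Function.update x.col w Colour.yellow (a j i) ≠ Colour.red := hne
          rwa [Function.update_of_ne (fun he => hwa he.symm)] at h2
    | sendGrn hw hc hmm hyr =>
        rename_i w r0
        by_cases hwa : w = a j i
        · exact absurd hw (fun hs =>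
            hwf.send_not_recv w hs (hwa ▸ (hrecv j).2 i))
        · refine absurd hpre ?_
          have h2 : Function.update x.col w Colour.green (a j i) ≠ Colour.red := hne
          rwa [Function.update_of_ne (fun he => hwa he.symm)] at h2
    | recvGrn hw hc hp hgrn hmm hgw =>
        rename_i w u0 w0
        by_cases hwa : w = a j i
        · subst hwa; rw [hc] at hpre; exact absurd hpre (by simp)
        · refine absurd hpre ?_
          have h2 : Function.update x.col w Colour.green (a j i) ≠ Colour.red := hne
          rwa [Function.update_of_ne (fun he => hwa he.symm)] at h2
    | endYel hw hc hp hgrn =>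
        rename_i w u0
        by_cases hwa : w = a j i
        · exact absurd hw (fun hs =>
            hwf.recv_not_end w (hwa ▸ (hrecv j).2 i) hs)
        · refine absurd hpre ?_
          have h2 : Function.update x.col w Colour.yellow (a j i) ≠ Colour.red := hne
          rwa [Function.update_of_ne (fun he => hwa he.symm)] at h2
    | endGrn hw hc =>
        rename_i w
        by_cases hwa : w = a j i
        · exact absurd hw (fun hs =>
            hwf.recv_not_end w (hwa ▸ (hrecv j).2 i) hs)
        · refine absurd hpre ?_
          have h2 : Function.update x.col w Colour.green (a j i) ≠ Colour.red := hne
          rwa [Function.update_of_ne (fun he => hwa he.symm)] at h2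
  · -- `a j i` was already coloured before the step
    rcases hA j i hpre with htok | hr
    · cases h with
      | sendYel hw hc hp hgrn => exact Or.inl htok
      | recvYel hw hc hmm hyw hp hgrn => exact Or.inl htok
      | sendGrn hw hc hmm hyr => exact Or.inl htok
      | endYel hw hc hp hgrn => exact Or.inl htok
      | endGrn hw hc => exact Or.inl htok
      | recvYelTok hw hc hmm hyw hpool =>
          rename_i w w0
          left
          show Function.update x.tok w true (a j i) = true
          by_cases hwa : a j i = w
          · rw [hwa, Function.update_self]
          · rw [Function.update_of_ne hwa]; exact htok
      | recvGrn hw hc hp hgrn hmm hgw =>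
          rename_i w u0 w0
          by_cases hwa : w = a j i
          · subst hwa
            right
            have hrj := key u0 hp hgrn
            show Function.update x.col (a j i) Colour.green (r j) ≠ Colour.red
            rw [Function.update_of_ne hra]
            exact hrj
          · left
            show Function.update x.tok w false (a j i) = true
            rw [Function.update_of_ne (fun he => hwa he.symm)]; exact htok
    · exact Or.inr ((Step.mono h).ne_red hr)

include hring hB

lemma d1 : ∀ (l : List (Rule × St V)) (x : St V), IsSeq G x l → GInv G B x →
    AInv r a x → (∀ j, x.col (r j) = Colour.red) →
    (∃ j y, y ∈ states x l ∧ y.col (r j) ≠ Colour.red) →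
    ∃ k y, y ∈ states x l ∧ y.col (r k) = Colour.yellow ∧
      ∀ i, y.col (a k i) = Colour.red := by
  intro l
  induction l with
  | nil =>
      intro x _ _ _ hall hex
      obtain ⟨j, y, hy, hne⟩ := hex
      simp [states] at hy
      subst hy
      exact absurd (hall j) hne
  | cons p l ih =>
      intro x hseq hg hA hall hex
      obtain ⟨⟨ρ, z⟩, hstep, hseq'⟩ :
          ∃ p' : Rule × St V, Step G p'.1 x p'.2 ∧ IsSeq G p'.2 l := ⟨p, hseq.1, hseq.2⟩
      -- we work with the original `p`; note `p.2` is the state after the first step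
      by_cases h1 : ∀ j, p.2.col (r j) = Colour.red
      · have hg' : GInv G B p.2 := ginv_step hwf hseq.1 hg
        have hA' : AInv r a p.2 := ainv_step G hwf B _ _ _ _ hchain hrecv hg hA hseq.1
        have hex' : ∃ j y, y ∈ states p.2 l ∧ y.col (r j) ≠ Colour.red := by
          obtain ⟨j, y, hy, hne⟩ := hex
          rw [states_cons] at hy
          rcases List.mem_cons.mp hy with he | hm
          · subst he; exact absurd (hall j) hne
          · exact ⟨j, y, hm, hne⟩
        obtain ⟨k, y, hy, h2, h3⟩ := ih p.2 hseq.2 hg' hA' h1 hex'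
        exact ⟨k, y, by rw [states_cons]; exact List.mem_cons_of_mem _ hy, h2, h3⟩
      · push_neg at h1
        obtain ⟨k, hk⟩ := h1
        have hmem : p.2 ∈ states x (p :: l) := by
          rw [states_cons]
          exact List.mem_cons_of_mem _ (by cases l <;> simp [states])
        have hstep := hseq.1
        -- analyse the first step; it must colour `r k` yellow by `recvYelTok`
        obtain ⟨ρ', z'⟩ := p
        cases hstep with
        | sendYel hw hc hp hgrn =>
            rename_i w u0
            exfalso
            by_cases hwk : w = r k
            · exact hwf.send_not_recv w hw (hwk ▸ (hrecv k).1)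
            · refine hk ?_
              show Function.update x.col w Colour.yellow (r k) = Colour.red
              rw [Function.update_of_ne (fun he => hwk he.symm)]
              exact hall k
        | endYel hw hc hp hgrn =>
            rename_i w u0
            exfalso
            by_cases hwk : w = r k
            · exact hwf.recv_not_end w (hwk ▸ (hrecv k).1) hw
            · refine hk ?_
              show Function.update x.col w Colour.yellow (r k) = Colour.red
              rw [Function.update_of_ne (fun he => hwk he.symm)]
              exact hall k
        | sendGrn hw hc hmm hyr =>
            rename_i w r0
            exfalso
            by_cases hwk : w = r k
            · exact hwf.send_not_recv w hw (hwk ▸ (hrecv k).1)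
            · refine hk ?_
              show Function.update x.col w Colour.green (r k) = Colour.red
              rw [Function.update_of_ne (fun he => hwk he.symm)]
              exact hall k
        | endGrn hw hc =>
            rename_i w
            exfalso
            by_cases hwk : w = r k
            · exact hwf.recv_not_end w (hwk ▸ (hrecv k).1) hw
            · refine hk ?_
              show Function.update x.col w Colour.green (r k) = Colour.red
              rw [Function.update_of_ne (fun he => hwk he.symm)]
              exact hall k
        | recvGrn hw hc hp hgrn hmm hgw =>
            rename_i w u0 w0
            exfalso
            by_cases hwk : w = r k
            · subst hwk; rw [hall k] at hc; exact Colour.noConfusion hc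
            · refine hk ?_
              show Function.update x.col w Colour.green (r k) = Colour.red
              rw [Function.update_of_ne (fun he => hwk he.symm)]
              exact hall k
        | recvYel hw hc hmm hyw hp hgrn =>
            rename_i w u0 w0
            exfalso
            by_cases hwk : w = r k
            · subst hwk
              have hu : u0 = s k := hwf.pred_unique hp (hchain k).2.1
              rw [hu] at hgrn
              exact hg.2.2.1 (s k) (r (k+1)) (hring k) hgrn (hall (k+1))
            · refine hk ?_
              show Function.update x.col w Colour.yellow (r k) = Colour.red
              rw [Function.update_of_ne (fun he => hwk he.symm)]
              exact hall k
        | recvYelTok hw hc hmm hyw hpool =>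
            rename_i w w0
            by_cases hwk : w = r k
            · subst hwk
              refine ⟨k, _, hmem, ?_, ?_⟩
              · show Function.update x.col (r k) Colour.yellow (r k) = Colour.yellow
                rw [Function.update_self]
              · intro i
                have hra : r k ≠ a k i := r_ne_a G hwf _ _ _ _ hchain k i
                show Function.update x.col (r k) Colour.yellow (a k i) = Colour.red
                rw [Function.update_of_ne (Ne.symm hra)]
                by_contra hne
                rcases hA k i hne with htok | hr
                · -- the token of component k is already placed: contradiction
                  have hca : G.comp (a k i) = G.comp (s k) := comp_a G hwf _ _ _ _ hchain k i
                  have hcr : G.comp (r k) = G.comp (s k) := comp_r G hwf _ _ _ _ hchain k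
                  have hmemf : a k i ∈ Finset.univ.filter
                      (fun v => x.tok v = true ∧ G.comp v = G.comp (r k)) := by
                    simp [Finset.mem_filter, htok, hca, hcr]
                  have hcnt : 0 < tokCnt G x.tok (G.comp (r k)) :=
                    Finset.card_pos.mpr ⟨a k i, hmemf⟩
                  have hPc := hg.2.2.2.2 (G.comp (r k))
                  rw [hcr, hB k] at hPc
                  rw [hcr] at hpool hcnt
                  omega
                · exact hr (hall k)
            · exfalso
              refine hk ?_
              show Function.update x.col w Colour.yellow (r k) = Colour.red
              rw [Function.update_of_ne (fun he => hwk he.symm)]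
              exact hall k

omit hrecv hring hB

include hstart hsend

lemma E1 (x : St V) (hg : GInv G B x) (j : Fin t) :
    ∃ y, Reaches G x y ∧ y.col (s j) ≠ Colour.red := by
  cases hc : x.col (s j) with
  | red =>
      refine ⟨_, Reaches.single
        (Step.sendYel (hsend j) hc (hchain j).1 (hg.1 _ (hstart j))), ?_⟩
      show Function.update x.col (s j) Colour.yellow (s j) ≠ Colour.red
      rw [Function.update_self]; simp
  | yellow => exact ⟨x, Reaches.refl x, by rw [hc]; simp⟩
  | green => exact ⟨x, Reaches.refl x, by rw [hc]; simp⟩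

omit hstart
include hring

lemma E2 (x : St V) (hg : GInv G B x) (j : Fin t)
    (hs : x.col (s j) ≠ Colour.red) (hr1 : x.col (r (j+1)) ≠ Colour.red) :
    ∃ y, Reaches G x y ∧ y.col (s j) = Colour.green := by
  cases hc : x.col (s j) with
  | red => exact absurd hc hs
  | green => exact ⟨x, Reaches.refl x, hc⟩
  | yellow =>
      cases hc1 : x.col (r (j+1)) with
      | red => exact absurd hc1 hr1
      | green =>
          exact absurd (hg.2.1 (s j) (r (j+1)) (hring j) hc1) (by rw [hc]; simp)
      | yellow =>
          refine ⟨_, Reaches.single (Step.sendGrn (hsend j) hc (hring j) hc1), ?_⟩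
          show Function.update x.col (s j) Colour.green (s j) = Colour.green
          rw [Function.update_self]

include hstart hrecv

open Fin.CommRing

lemma s_ne_r (j j' : Fin t) : s j ≠ r j' :=
  fun he => hwf.send_not_recv (s j) (hsend j) (he ▸ (hrecv j').1)

lemma E3 (x : St V) (hg : GInv G B x) (j : Fin t)
    (hsg : x.col (s j) = Colour.green) :
    ∃ y, Reaches G x y ∧ y.col (r j) ≠ Colour.red ∧ y.col (s j) = Colour.green := by
  have hm : G.matched (s (j-1)) (r j) := by
    have := hring (j-1)
    rwa [show j - 1 + 1 = j by ring] at this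
  cases hc : x.col (r j) with
  | yellow => exact ⟨x, Reaches.refl x, by rw [hc]; simp, hsg⟩
  | green => exact ⟨x, Reaches.refl x, by rw [hc]; simp, hsg⟩
  | red =>
      cases hc1 : x.col (s (j-1)) with
      | green => exact absurd hc (hg.2.2.1 _ _ hm hc1)
      | yellow =>
          have hstp := Step.recvYel (G := G) ((hrecv j).1) hc hm hc1 (hchain j).2.1 hsg
          refine ⟨_, Reaches.single hstp, ?_, ?_⟩
          · show Function.update x.col (r j) Colour.yellow (r j) ≠ Colour.red
            rw [Function.update_self]; simp
          · exact (Step.mono hstp).green hsg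
      | red =>
          have hstp1 := Step.sendYel (G := G) (hsend (j-1)) hc1 (hchain (j-1)).1
            (hg.1 _ (hstart (j-1)))
          set y1 : St V :=
            ⟨Function.update x.col (s (j-1)) Colour.yellow, x.tok, x.pool⟩ with hy1def
          have hy1r : y1.col (r j) = Colour.red := by
            show (Function.update x.col (s (j-1)) Colour.yellow) (r j) = Colour.red
            rw [Function.update_of_ne
              (Ne.symm (s_ne_r G hwf _ _ _ _ hstart hchain hsend hrecv hring (j-1) j))]
            exact hc
          have hy1s : y1.col (s (j-1)) = Colour.yellow := by
            show (Function.update x.col (s (j-1)) Colour.yellow) (s (j-1)) = Colour.yellow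
            rw [Function.update_self]
          have hy1g : y1.col (s j) = Colour.green := (Step.mono hstp1).green hsg
          have hstp2 := Step.recvYel (G := G) (s := y1) ((hrecv j).1) hy1r hm hy1s
            (hchain j).2.1 hy1g
          refine ⟨_, (Reaches.single hstp1).trans (Reaches.single hstp2), ?_, ?_⟩
          · show Function.update y1.col (r j) Colour.yellow (r j) ≠ Colour.red
            rw [Function.update_self]; simp
          · exact (Step.mono hstp2).green hy1g

lemma d2core (x : St V) (hg : GInv G B x) (k : Fin t)
    (hk : x.col (r k) ≠ Colour.red) (m : ℕ) :
    ∃ y, Reaches G x y ∧ y.col (r k) ≠ Colour.red ∧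
      ∀ i : ℕ, 1 ≤ i → i ≤ m → y.col (s (k - (i : Fin t))) = Colour.green ∧
        y.col (r (k - (i : Fin t))) ≠ Colour.red := by
  induction m with
  | zero => exact ⟨x, Reaches.refl x, hk, fun i h1 h2 => absurd (h1.trans h2) (by omega)⟩
  | succ m IH =>
      obtain ⟨y, hxy, hky, hprev⟩ := IH
      have hgy : GInv G B y := ginv_reaches hwf hxy hg
      have hj1 : (k - (((m+1 : ℕ)) : Fin t)) + 1 = k - ((m : ℕ) : Fin t) := by
        push_cast
        ring
      have hrj1 : y.col (r ((k - (((m+1 : ℕ)) : Fin t)) + 1)) ≠ Colour.red := by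
        rcases Nat.eq_zero_or_pos m with hm | hm
        · subst hm
          rw [hj1]
          simpa using hky
        · rw [hj1]
          exact (hprev m hm le_rfl).2
      obtain ⟨y1, hy1, hs1⟩ := E1 G hwf B _ _ _ _ hstart hchain hsend y hgy
        (k - (((m+1 : ℕ)) : Fin t))
      have hg1 : GInv G B y1 := ginv_reaches hwf hy1 hgy
      obtain ⟨y2, hy2, hs2⟩ := E2 G hwf B _ _ _ _ hchain hsend hring y1 hg1
        (k - (((m+1 : ℕ)) : Fin t)) hs1 (hy1.colLe.ne_red hrj1)
      have hg2 : GInv G B y2 := ginv_reaches hwf hy2 hg1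
      obtain ⟨y3, hy3, hr3, hs3⟩ := E3 G hwf B _ _ _ _ hstart hchain hsend hrecv hring
        y2 hg2 (k - (((m+1 : ℕ)) : Fin t)) hs2
      have hall3 : colLe y y3 := (hy1.trans (hy2.trans hy3)).colLe
      refine ⟨y3, hxy.trans (hy1.trans (hy2.trans hy3)), hall3.ne_red hky, ?_⟩
      intro i h1 h2
      rcases Nat.lt_or_ge i (m+1) with hi | hi
      · have hpi := hprev i h1 (by omega)
        exact ⟨hall3.green hpi.1, hall3.ne_red hpi.2⟩
      · have hieq : i = m + 1 := by omega
        subst hieq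
        exact ⟨hs3, hr3⟩

lemma all_green_sr (x : St V) (hg : GInv G B x) (k : Fin t)
    (hk : x.col (r k) ≠ Colour.red) :
    ∃ y, Reaches G x y ∧ ∀ j, y.col (s j) = Colour.green ∧
      y.col (r j) ≠ Colour.red := by
  obtain ⟨y, hxy, hky, hall⟩ := d2core G hwf B _ _ _ _ hstart hchain hsend hrecv hring
    x hg k hk t
  refine ⟨y, hxy, fun j => ?_⟩
  by_cases hjk : j = k
  · subst hjk
    have h1 : (1:ℕ) ≤ t := (NeZero.pos t)
    have := hall t h1 le_rfl
    rwa [show ((t : ℕ) : Fin t) = 0 from Fin.natCast_self t, sub_zero] at this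
  · have hi0 : (((k - j : Fin t) : ℕ) : Fin t) = k - j := Fin.cast_val_eq_self _
    have hne : k - j ≠ 0 := sub_ne_zero.mpr (Ne.symm hjk)
    have h1 : 1 ≤ ((k - j : Fin t) : ℕ) := by
      rcases Nat.eq_zero_or_pos ((k - j : Fin t) : ℕ) with h | h
      · exact absurd (by rw [← hi0, h]; simp) hne
      · exact h
    have h2 : ((k - j : Fin t) : ℕ) ≤ t := le_of_lt (Fin.is_lt _)
    have := hall _ h1 h2
    rwa [hi0, sub_sub_cancel] at this

lemma d2 (x : St V) (hg : GInv G B x) (k : Fin t)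
    (hk : x.col (r k) ≠ Colour.red) (j : Fin t) :
    ∃ y, Reaches G x y ∧ y.col (r j) = Colour.green := by
  obtain ⟨y, hxy, hall⟩ := all_green_sr G hwf B _ _ _ _ hstart hchain hsend hrecv hring
    x hg k hk
  cases hc : y.col (r j) with
  | red => exact absurd hc (hall j).2
  | green => exact ⟨y, hxy, hc⟩
  | yellow =>
      have hm : G.matched (s (j-1)) (r j) := by
        have := hring (j-1)
        rwa [show j - 1 + 1 = j by ring] at this
      have hstp := Step.recvGrn (G := G) ((hrecv j).1) hc (hchain j).2.1
        (hall j).1 hm (hall (j-1)).1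
      refine ⟨_, hxy.trans (Reaches.single hstp), ?_⟩
      show Function.update y.col (r j) Colour.green (r j) = Colour.green
      rw [Function.update_self]

end Widget

end DWAux

/-- **Disjunction-widget property of the BSP_r construction.** The widget has `t`
term components `P_j : start → s_j → r_j → a_{j,0} → a_{j,1} → a_{j,2}`, where the
`s_j, r_j` form a `t`-ring (`s_j` matched to `r_{j+1}`), the receives `a_{j,i}`
are matched with sends outside the widget, and each term component holds exactly
one token. In any colouring sequence, some `r_j` becomes green only if some `r_k`
is yellow while `a_{k,0}, a_{k,1}, a_{k,2}` are still red; and conversely, if that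
happens, the sequence can be extended to colour every `r_j` green. -/
theorem disjunction_widget {V : Type} [DecidableEq V] [Fintype V]
    (t : ℕ) [NeZero t] (ht : 1 < t)
    (G : CommGraph V) (hwf : G.WF) (B : ℕ → ℕ)
    (st : Fin t → V) (s r : Fin t → V) (a : Fin t → Fin 3 → V)
    (hstart : ∀ j, G.isStart (st j))
    (hchain : ∀ j, G.pred (st j) (s j) ∧ G.pred (s j) (r j) ∧ G.pred (r j) (a j 0) ∧
      G.pred (a j 0) (a j 1) ∧ G.pred (a j 1) (a j 2))
    (hsend : ∀ j, G.isSend (s j))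
    (hrecv : ∀ j, G.isRecv (r j) ∧ ∀ i, G.isRecv (a j i))
    (hring : ∀ j, G.matched (s j) (r (j + 1)))
    (hextern : ∀ j i w, G.matched w (a j i) →
      G.comp w ∉ Set.range fun j' => G.comp (s j'))
    (honly : ∀ j, ∀ v, G.isRecv v → G.comp v = G.comp (s j) →
      v = r j ∨ v = a j 0 ∨ v = a j 1 ∨ v = a j 2)
    (hdisj : Function.Injective fun j => G.comp (s j))
    (hB : ∀ j, B (G.comp (s j)) = 1) :
    ∀ l, IsSeq G (init G B) l →
      (((∃ j, ∃ st' ∈ states (init G B) l, st'.col (r j) = Colour.green) →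
        ∃ k, ∃ st' ∈ states (init G B) l, st'.col (r k) = Colour.yellow ∧
          ∀ i, st'.col (a k i) = Colour.red) ∧
       ((∃ k, ∃ st' ∈ states (init G B) l, st'.col (r k) = Colour.yellow ∧
          ∀ i, st'.col (a k i) = Colour.red) →
        ∀ j, ∃ l', IsSeq G (finalSt (init G B) l) l' ∧
          (finalSt (finalSt (init G B) l) l').col (r j) = Colour.green)) := by
  intro l hseq
  have hgi : DWAux.GInv G B (init G B) := DWAux.ginv_init hwf B
  have hai := DWAux.ainv_init G hwf B st s r a hchain hrecv
  have hrr := DWAux.init_r_red G hwf B st s r a hchain hrecv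
  constructor
  · rintro ⟨j, st', hmem, hgr⟩
    exact DWAux.d1 G hwf B st s r a hchain hrecv hring hB l (init G B) hseq hgi hai hrr
      ⟨j, st', hmem, by rw [hgr]; simp⟩
  · rintro ⟨k, st', hmem, hyel, -⟩ j
    have hFk : (finalSt (init G B) l).col (r k) ≠ Colour.red :=
      DWAux.colLe.ne_red (DWAux.colLe_finalSt_of_mem l _ st' hseq hmem)
        (by rw [hyel]; simp)
    have hgF : DWAux.GInv G B (finalSt (init G B) l) :=
      DWAux.ginv_isSeq hwf l _ hseq hgi
    obtain ⟨y, ⟨l', hl', hfin⟩, hgr⟩ :=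
      DWAux.d2 G hwf B st s r a hstart hchain hsend hrecv hring _ hgF k hFk j
    exact ⟨l', hl', by rw [hfin]; exact hgr⟩
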